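/- Under the stated tail assumption on ν, the function H is nondecreasing on [0,1], there is a constant C > 0 with H(x) ≤ C x^{1+β} for all x ∈ (0,1], and lim_{x→0+} H(x)/x^{1+β} = (c_ν/β)·Γ(1−β), where Γ is the Gamma function. Equivalently, H(x) = K x^{1+β} W(x) with K = (c_ν/β)Γ(1−β) and W : (0,1] → [0,∞) bounded with lim_{x→0+} W(x) = 1. -/

import Mathlib

set_option autoImplicit false

open MeasureTheory Filter Set

open Topology

set_option maxHeartbeats 1000000

section Aux

lemma contOn_rpow (c : ℝ) : ContinuousOn (fun t : ℝ => t ^ c) (Ioi (0:ℝ)) :=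
  fun t ht => (Real.continuousAt_rpow_const t c (Or.inl (ne_of_gt ht))).continuousWithinAt

lemma phi_nonneg (t : ℝ) : 0 ≤ Real.exp (-t) - 1 + t := by
  have := Real.add_one_le_exp (-t); linarith

lemma one_sub_exp_le_min {t : ℝ} : 1 - Real.exp (-t) ≤ min 1 t :=
  le_min (by have := Real.exp_pos (-t); linarith)
    (by have := Real.add_one_le_exp (-t); linarith)

lemma one_sub_exp_nonneg {t : ℝ} (ht : 0 ≤ t) : 0 ≤ 1 - Real.exp (-t) := by
  have : Real.exp (-t) ≤ 1 := Real.exp_le_one_iff.mpr (by linarith)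
  linarith

lemma min_rpow_integrable {β : ℝ} (hβ0 : 0 < β) (hβ1 : β < 1) :
    IntegrableOn (fun t : ℝ => min 1 t * t ^ (-1-β)) (Ioi (0:ℝ)) := by
  have h01 : (Ioc (0:ℝ) 1) ∪ Ioi 1 = Ioi 0 := Ioc_union_Ioi_eq_Ioi zero_le_one
  rw [← h01, integrableOn_union]
  constructor
  · have hint : IntegrableOn (fun t : ℝ => t ^ (-β)) (Ioc (0:ℝ) 1) := by
      rw [← intervalIntegrable_iff_integrableOn_Ioc_of_le zero_le_one]
      exact intervalIntegral.intervalIntegrable_rpow' (by linarith)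
    refine hint.congr_fun (fun t ht => ?_) measurableSet_Ioc
    have ht0 : (0:ℝ) < t := ht.1
    rw [min_eq_right ht.2]
    have h2 := Real.rpow_add ht0 1 (-1-β)
    rw [Real.rpow_one] at h2
    rw [← h2]
    congr 1; ring
  · have hint : IntegrableOn (fun t : ℝ => t ^ (-1-β)) (Ioi (1:ℝ)) :=
      integrableOn_Ioi_rpow_of_lt (by linarith) one_pos
    refine hint.congr_fun (fun t ht => ?_) measurableSet_Ioi
    rw [min_eq_left (le_of_lt ht), one_mul]

lemma gamma_int {β : ℝ} (hβ1 : β < 1) :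
    IntegrableOn (fun t : ℝ => Real.exp (-t) * t ^ (-β)) (Ioi (0:ℝ)) := by
  have := Real.GammaIntegral_convergent (s := 1-β) (by linarith)
  simpa [show (1:ℝ)-β-1 = -β from by ring] using this

lemma gamma_eq {β : ℝ} (hβ1 : β < 1) :
    Real.Gamma (1-β) = ∫ t in Ioi (0:ℝ), Real.exp (-t) * t ^ (-β) := by
  rw [Real.Gamma_eq_integral (by linarith : (0:ℝ) < 1 - β)]
  simp [show (1:ℝ)-β-1 = -β from by ring]

lemma J_integrable {β : ℝ} (hβ0 : 0 < β) (hβ1 : β < 1) :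
    IntegrableOn (fun t : ℝ => (1 - Real.exp (-t)) * t ^ (-1-β)) (Ioi (0:ℝ)) := by
  refine (min_rpow_integrable hβ0 hβ1).mono' ?_ ?_
  · exact (((continuous_const.sub (Real.continuous_exp.comp continuous_neg)).continuousOn).mul
      (contOn_rpow _)).aestronglyMeasurable measurableSet_Ioi
  · rw [ae_restrict_iff' measurableSet_Ioi]
    refine Eventually.of_forall fun t ht => ?_
    have ht0 : (0:ℝ) < t := ht
    have hr : (0:ℝ) ≤ t ^ (-1-β) := Real.rpow_nonneg ht0.le _
    rw [norm_mul, Real.norm_eq_abs, Real.norm_eq_abs, abs_of_nonneg hr,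
      abs_of_nonneg (one_sub_exp_nonneg ht0.le)]
    exact mul_le_mul_of_nonneg_right one_sub_exp_le_min hr

lemma aux_J {β : ℝ} (hβ0 : 0 < β) (hβ1 : β < 1) :
    ∫ t in Ioi (0:ℝ), (1 - Real.exp (-t)) * t ^ (-1-β) = Real.Gamma (1-β) / β := by
  set f1 : ℝ → ℝ := fun t => (1 - Real.exp (-t)) * t ^ (-1-β) with hf1
  set f2 : ℝ → ℝ := fun t => Real.exp (-t) * t ^ (-β) with hf2
  have key : ∀ ε : ℝ, 0 < ε → ∫ t in Ioi ε, f1 t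
      = (1/β) * ((1 - Real.exp (-ε)) * ε ^ (-β)) + (1/β) * ∫ t in Ioi ε, f2 t := by
    intro ε hε
    have hint1 : IntegrableOn f1 (Ioi ε) :=
      (J_integrable hβ0 hβ1).mono_set (Ioi_subset_Ioi hε.le)
    have hint2 : IntegrableOn f2 (Ioi ε) :=
      (gamma_int hβ1).mono_set (Ioi_subset_Ioi hε.le)
    have hderiv : ∀ t ∈ Ici ε, HasDerivAt (fun t => -(1/β) * ((1 - Real.exp (-t)) * t ^ (-β)))
        (f1 t - (1/β) * f2 t) t := by
      intro t ht
      have ht0 : (0:ℝ) < t := lt_of_lt_of_le hε ht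
      have h1 : HasDerivAt (fun t : ℝ => 1 - Real.exp (-t)) (Real.exp (-t)) t := by
        have := ((Real.hasDerivAt_exp (-t)).comp t (hasDerivAt_neg t)).const_sub 1
        simpa using this
      have h2 : HasDerivAt (fun t : ℝ => t ^ (-β)) (-β * t ^ (-β-1)) t :=
        Real.hasDerivAt_rpow_const (Or.inl (ne_of_gt ht0))
      have h3 := (h1.mul h2).const_mul (-(1/β))
      refine h3.congr_deriv ?_
      have he : t ^ (-β-1) = t ^ (-1-β) := by congr 1; ring
      rw [he]
      simp only [hf1, hf2]
      field_simp
      ring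
    have htend : Tendsto (fun t => -(1/β) * ((1 - Real.exp (-t)) * t ^ (-β))) atTop (𝓝 0) := by
      have h1 : Tendsto (fun t : ℝ => 1 - Real.exp (-t)) atTop (𝓝 1) := by
        simpa using tendsto_const_nhds.sub Real.tendsto_exp_neg_atTop_nhds_zero
      have := ((h1.mul (tendsto_rpow_neg_atTop hβ0)).const_mul (-(1/β)))
      simpa using this
    have hFTC := integral_Ioi_of_hasDerivAt_of_tendsto'
      hderiv (hint1.sub (hint2.const_mul (1/β))) htend
    rw [integral_sub hint1 (hint2.const_mul (1/β)), integral_const_mul] at hFTC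
    have : -(1/β) * ((1 - Real.exp (-ε)) * ε ^ (-β))
        = -((1/β) * ((1 - Real.exp (-ε)) * ε ^ (-β))) := by ring
    rw [this] at hFTC
    linarith [hFTC]
  set e : ℕ → ℝ := fun n => ((n:ℝ)+1)⁻¹ with he
  have he_pos : ∀ n, 0 < e n := fun n => by positivity
  have he0 : Tendsto e atTop (𝓝 0) := by
    have h := (tendsto_one_div_add_atTop_nhds_zero_nat :
      Tendsto (fun n : ℕ => 1 / ((n:ℝ) + 1)) atTop (𝓝 0))
    simpa only [he, one_div] using h
  have hmono : Monotone (fun n => Ioi (e n)) := by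
    intro n m hnm
    apply Ioi_subset_Ioi
    apply inv_anti₀ (by positivity)
    linarith [(Nat.cast_le (α := ℝ)).mpr hnm]
  have hUnion : (⋃ n, Ioi (e n)) = Ioi (0:ℝ) := by
    ext x
    simp only [mem_iUnion, mem_Ioi]
    constructor
    · rintro ⟨n, hn⟩; exact lt_trans (he_pos n) hn
    · intro hx
      obtain ⟨n, hn⟩ := exists_nat_one_div_lt hx
      exact ⟨n, by simpa [he, one_div] using hn⟩
  have h1 : Tendsto (fun n => ∫ t in Ioi (e n), f1 t) atTop (𝓝 (∫ t in Ioi (0:ℝ), f1 t)) := by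
    have := tendsto_setIntegral_of_monotone (fun n => measurableSet_Ioi) hmono
      (hUnion ▸ (J_integrable hβ0 hβ1))
    rwa [hUnion] at this
  have h2 : Tendsto (fun n => ∫ t in Ioi (e n), f2 t) atTop (𝓝 (Real.Gamma (1-β))) := by
    have := tendsto_setIntegral_of_monotone (fun n => measurableSet_Ioi) hmono
      (hUnion ▸ (gamma_int hβ1))
    rw [hUnion] at this
    rwa [← gamma_eq hβ1] at this
  have h3 : Tendsto (fun n => (1/β) * ((1 - Real.exp (-(e n))) * (e n) ^ (-β))) atTop (𝓝 0) := by
    have hb : Tendsto (fun n => (1/β) * (e n) ^ (1-β)) atTop (𝓝 0) := by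
      have hc : Tendsto (fun n => (e n) ^ (1-β)) atTop (𝓝 0) := by
        have hcont := (Real.continuousAt_rpow_const 0 (1-β) (Or.inr (by linarith))).tendsto
        have := hcont.comp he0
        simpa [Function.comp_def, Real.zero_rpow (by linarith : (1:ℝ)-β ≠ 0)] using this
      simpa using hc.const_mul (1/β)
    refine squeeze_zero (fun n => ?_) (fun n => ?_) hb
    · have h0 := he_pos n
      have := one_sub_exp_nonneg (t := e n) h0.le
      have := Real.rpow_nonneg h0.le (-β)
      positivity
    · have hεn := he_pos n
      have hle : 1 - Real.exp (-(e n)) ≤ e n := by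
        have := Real.add_one_le_exp (-(e n)); linarith
      have : (1 - Real.exp (-(e n))) * (e n) ^ (-β) ≤ e n * (e n) ^ (-β) :=
        mul_le_mul_of_nonneg_right hle (Real.rpow_nonneg hεn.le _)
      have heq : e n * (e n) ^ (-β) = (e n) ^ (1-β) := by
        rw [show (1:ℝ)-β = 1 + (-β) from by ring, Real.rpow_add hεn, Real.rpow_one]
      calc (1/β) * ((1 - Real.exp (-(e n))) * (e n) ^ (-β))
          ≤ (1/β) * (e n * (e n) ^ (-β)) := by
            apply mul_le_mul_of_nonneg_left this (by positivity)
        _ = (1/β) * (e n) ^ (1-β) := by rw [heq]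
  have hcomb : Tendsto (fun n => (1/β) * ((1 - Real.exp (-(e n))) * (e n) ^ (-β))
      + (1/β) * ∫ t in Ioi (e n), f2 t) atTop (𝓝 (0 + (1/β) * Real.Gamma (1-β))) :=
    h3.add (h2.const_mul (1/β))
  have h1' : Tendsto (fun n => ∫ t in Ioi (e n), f1 t)
      atTop (𝓝 (0 + (1/β) * Real.Gamma (1-β))) := by
    refine hcomb.congr fun n => ?_
    exact (key (e n) (he_pos n)).symm
  have hring : (0:ℝ) + 1/β * Real.Gamma (1-β) = Real.Gamma (1-β)/β := by ring
  rw [hring] at h1'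
  exact tendsto_nhds_unique h1 h1'

end Aux

/-- Under the tail assumption on ν, the function
`H(u) = G(1-u) - 1 + u` (with `G` the Laplace transform of ν) is nondecreasing
on `[0,1]`, satisfies `H(x) ≤ C x^{1+β}` on `(0,1]`, and
`H(x)/x^{1+β} → (c_ν/β)Γ(1-β)` as `x → 0+`; equivalently
`H(x) = K x^{1+β} W(x)` with `K = (c_ν/β)Γ(1-β)` and `W` bounded,
nonnegative, with `W(x) → 1` as `x → 0+`. -/
theorem stmt0
    (ν : Measure ℝ) [IsProbabilityMeasure ν]
    (hν_supp : ν (Iio 0) = 0)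
    (hν_mean : ∫ x, x ∂ν = 1)
    (β cν : ℝ) (hβ : β ∈ Ioo (0 : ℝ) 1) (hcν : 0 < cν)
    (hν_tail : Tendsto (fun x : ℝ => x ^ (1 + β) * (ν (Ioi x)).toReal)
      atTop (nhds cν))
    (G H : ℝ → ℝ)
    (hG : ∀ s, G s = ∫ z, Real.exp (-z * (1 - s)) ∂ν)
    (hH : ∀ u, H u = G (1 - u) - 1 + u) :
    MonotoneOn H (Icc 0 1) ∧
    (∃ C > 0, ∀ x ∈ Ioc (0 : ℝ) 1, H x ≤ C * x ^ (1 + β)) ∧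
    Tendsto (fun x : ℝ => H x / x ^ (1 + β)) (nhdsWithin 0 (Ioi 0))
      (nhds (cν / β * Real.Gamma (1 - β))) ∧
    (∃ W : ℝ → ℝ, (∀ x ∈ Ioc (0 : ℝ) 1, 0 ≤ W x) ∧
      (∃ M, ∀ x ∈ Ioc (0 : ℝ) 1, W x ≤ M) ∧
      Tendsto W (nhdsWithin 0 (Ioi 0)) (nhds 1) ∧
      (∀ x ∈ Ioc (0 : ℝ) 1,
        H x = (cν / β * Real.Gamma (1 - β)) * x ^ (1 + β) * W x)) := by
  obtain ⟨hβ0, hβ1⟩ := hβ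
  have hΓ : 0 < Real.Gamma (1 - β) := Real.Gamma_pos_of_pos (by linarith)
  set K : ℝ := cν / β * Real.Gamma (1 - β) with hK
  have hKpos : 0 < K := by positivity
  -- a.e. nonnegativity of the support
  have hz0 : ∀ᵐ z ∂ν, 0 ≤ z := by
    rw [ae_iff]
    convert hν_supp using 2
    ext z; simp [not_le]
  -- integrability of the identity
  have hid_int : Integrable (fun z : ℝ => z) ν := by
    by_contra h
    rw [integral_undef h] at hν_mean
    norm_num at hν_mean
  -- integrability of exponentials
  have hexp_int : ∀ x : ℝ, 0 ≤ x → Integrable (fun z => Real.exp (-z * x)) ν := by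
    intro x hx
    refine Integrable.mono' (integrable_const 1) ?_ ?_
    · exact (Real.continuous_exp.comp ((continuous_neg.mul continuous_const))).aestronglyMeasurable
    · filter_upwards [hz0] with z hz
      rw [Real.norm_eq_abs, abs_of_pos (Real.exp_pos _)]
      exact Real.exp_le_one_iff.mpr (by nlinarith)
  have hphi_int : ∀ x : ℝ, 0 ≤ x →
      Integrable (fun z => Real.exp (-z * x) - 1 + z * x) ν := by
    intro x hx
    exact ((hexp_int x hx).sub (integrable_const 1)).add (hid_int.mul_const x)
  -- H as an integral
  have hHint : ∀ x : ℝ, 0 ≤ x → H x = ∫ z, (Real.exp (-z * x) - 1 + z * x) ∂ν := by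
    intro x hx
    rw [hH, hG]
    simp only [sub_sub_cancel]
    have h1 : Integrable (fun z : ℝ => Real.exp (-z * x) - 1) ν :=
      (hexp_int x hx).sub (integrable_const 1)
    have h2 : Integrable (fun z : ℝ => z * x) ν := hid_int.mul_const x
    rw [integral_add h1 h2, integral_sub (hexp_int x hx) (integrable_const 1),
      integral_mul_const, hν_mean, integral_const]
    simp
  -- nonnegativity of H on [0, ∞)
  have hHnonneg : ∀ x : ℝ, 0 ≤ x → 0 ≤ H x := by
    intro x hx
    rw [hHint x hx]
    refine integral_nonneg fun z => ?_
    have := phi_nonneg (z * x)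
    simpa [neg_mul] using this
  -- monotonicity
  have hmono : MonotoneOn H (Icc 0 1) := by
    intro u hu v hv huv
    have h1 := hphi_int u hu.1
    have h2 := hphi_int v hv.1
    rw [hHint u hu.1, hHint v hv.1, ← sub_nonneg, ← integral_sub h2 h1]
    refine integral_nonneg_of_ae ?_
    filter_upwards [hz0] with z hz
    have e1 : Real.exp (-z*u) ≤ 1 := Real.exp_le_one_iff.mpr
      (by nlinarith [mul_nonneg hz hu.1])
    have e2 := Real.add_one_le_exp (z*u - z*v)
    have e3 : Real.exp (-z*v) = Real.exp (-z*u) * Real.exp (z*u - z*v) := by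
      rw [← Real.exp_add]; ring_nf
    have e4 : 0 < Real.exp (-z*u) := Real.exp_pos _
    have e5 : z*u ≤ z*v := mul_le_mul_of_nonneg_left huv hz
    have e6 := mul_le_mul_of_nonneg_left e2 e4.le
    simp only [Pi.zero_apply]
    nlinarith [e6]
  -- tail function
  set ψ : ℝ → ℝ := fun y => (ν (Ioi y)).toReal with hψdef
  have hνIoi_meas : Measurable fun y : ℝ => ν (Ioi y) :=
    Antitone.measurable (fun a b hab => measure_mono (Ioi_subset_Ioi hab))
  have hψmeas : Measurable ψ := ENNReal.measurable_toReal.comp hνIoi_meas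
  have hψ0 : ∀ y, 0 ≤ ψ y := fun y => ENNReal.toReal_nonneg
  have hψ1 : ∀ y, ψ y ≤ 1 := by
    intro y
    have h := prob_le_one (μ := ν) (s := Ioi y)
    exact ENNReal.toReal_le_of_le_ofReal zero_le_one (by simpa using h)
  -- FTC for the inner integral
  have inner : ∀ y : ℝ, (∫ s in (0:ℝ)..y, (1 - Real.exp (-s))) = Real.exp (-y) - 1 + y := by
    intro y
    have hd : ∀ s ∈ uIcc (0:ℝ) y,
        HasDerivAt (fun s : ℝ => s + Real.exp (-s)) (1 - Real.exp (-s)) s := by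
      intro s _
      have h1 := (Real.hasDerivAt_exp (-s)).comp s (hasDerivAt_neg s)
      have h2 := (hasDerivAt_id s).add h1
      refine h2.congr_deriv ?_
      simp; ring
    have hi : IntervalIntegrable (fun s : ℝ => 1 - Real.exp (-s)) volume 0 y :=
      ((continuous_const.sub (Real.continuous_exp.comp continuous_neg))).intervalIntegrable _ _
    rw [intervalIntegral.integral_eq_sub_of_hasDerivAt hd hi]
    simp [Real.exp_zero]; ring
  -- layer-cake representation of H
  have hrep : ∀ x : ℝ, 0 < x →
      H x = ∫ t in Ioi (0:ℝ), ψ (t / x) * (1 - Real.exp (-t)) := by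
    intro x hx
    have f_nn : 0 ≤ᵐ[ν] fun z : ℝ => z * x := by
      filter_upwards [hz0] with z hz; exact mul_nonneg hz hx.le
    have f_mble : AEMeasurable (fun z : ℝ => z * x) ν := (measurable_id.mul_const x).aemeasurable
    have g_intble : ∀ t > (0:ℝ), IntervalIntegrable (fun s : ℝ => 1 - Real.exp (-s)) volume 0 t :=
      fun t _ =>
        ((continuous_const.sub (Real.continuous_exp.comp continuous_neg))).intervalIntegrable _ _
    have g_nn : ∀ᵐ t ∂(volume.restrict (Ioi (0:ℝ))), 0 ≤ 1 - Real.exp (-t) := by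
      rw [ae_restrict_iff' measurableSet_Ioi]
      exact Eventually.of_forall fun t ht => one_sub_exp_nonneg (le_of_lt ht)
    have lc := lintegral_comp_eq_lintegral_meas_lt_mul ν f_nn f_mble g_intble g_nn
    have lhs_eq : (∫⁻ z, ENNReal.ofReal (∫ t in (0:ℝ)..(z*x), (1 - Real.exp (-t))) ∂ν)
        = ∫⁻ z, ENNReal.ofReal (Real.exp (-(z*x)) - 1 + z*x) ∂ν :=
      lintegral_congr fun z => by rw [inner (z*x)]
    have hset : ∀ t : ℝ, {a : ℝ | t < a * x} = Ioi (t / x) := by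
      intro t; ext a
      simp only [mem_setOf_eq, mem_Ioi]
      exact (div_lt_iff₀ hx).symm
    have hHl : H x = (∫⁻ z, ENNReal.ofReal (Real.exp (-(z*x)) - 1 + z*x) ∂ν).toReal := by
      rw [hHint x hx.le, integral_eq_lintegral_of_nonneg_ae
        (Eventually.of_forall fun z => by simpa [neg_mul] using phi_nonneg (z*x))
        ((hphi_int x hx.le).aestronglyMeasurable)]
      congr 1
      exact lintegral_congr fun z => by rw [neg_mul]
    have hmeasR : Measurable fun t : ℝ => ν (Ioi (t/x)) * ENNReal.ofReal (1 - Real.exp (-t)) :=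
      (hνIoi_meas.comp (measurable_id.div_const x)).mul
        (ENNReal.measurable_ofReal.comp
          ((continuous_const.sub (Real.continuous_exp.comp continuous_neg)).measurable))
    have hfin : ∀ᵐ t ∂(volume.restrict (Ioi (0:ℝ))),
        ν (Ioi (t/x)) * ENNReal.ofReal (1 - Real.exp (-t)) < ⊤ :=
      Eventually.of_forall fun t => ENNReal.mul_lt_top (measure_lt_top ν _) ENNReal.ofReal_lt_top
    have hIR := integral_toReal (hmeasR.aemeasurable) hfin
    rw [hHl, ← lhs_eq, lc]
    have hset' : (∫⁻ t in Ioi (0:ℝ), ν {a | t < a * x} * ENNReal.ofReal (1 - Real.exp (-t)))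
        = ∫⁻ t in Ioi (0:ℝ), ν (Ioi (t/x)) * ENNReal.ofReal (1 - Real.exp (-t)) :=
      lintegral_congr fun t => by rw [hset t]
    rw [hset', ← hIR]
    refine integral_congr_ae ?_
    rw [Filter.EventuallyEq, ae_restrict_iff' measurableSet_Ioi]
    refine Eventually.of_forall fun t ht => ?_
    rw [ENNReal.toReal_mul, ENNReal.toReal_ofReal (one_sub_exp_nonneg (le_of_lt ht))]
  have hHdiv : ∀ x : ℝ, 0 < x → H x / x ^ (1+β)
      = ∫ t in Ioi (0:ℝ), ψ (t/x) * (1 - Real.exp (-t)) / x ^ (1+β) := by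
    intro x hx; rw [hrep x hx, integral_div]
  -- tail bound constant
  obtain ⟨A0, hA0⟩ : ∃ A0 : ℝ, ∀ y ≥ A0, y ^ (1+β) * ψ y ≤ cν + 1 :=
    eventually_atTop.mp (hν_tail.eventually (eventually_le_nhds (lt_add_one cν)))
  set A := max A0 1 with hAdef
  have hA1 : (1:ℝ) ≤ A := le_max_right _ _
  have hApos : (0:ℝ) < A := lt_of_lt_of_le one_pos hA1
  have hAtail : ∀ y ≥ A, y ^ (1+β) * ψ y ≤ cν + 1 :=
    fun y hy => hA0 y (le_trans (le_max_left _ _) hy)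
  set D : ℝ := cν + 1 + A ^ (2+β) with hDdef
  have hDpos : 0 < D := by positivity
  set g : ℝ → ℝ := fun t => D * (min 1 t * t ^ (-1-β)) with hgdef
  have hg_int : IntegrableOn g (Ioi (0:ℝ)) := (min_rpow_integrable hβ0 hβ1).const_mul D
  have hg_nonneg : ∀ t ∈ Ioi (0:ℝ), 0 ≤ g t := by
    intro t ht
    have ht0 : (0:ℝ) < t := ht
    have h1 : (0:ℝ) ≤ t ^ (-1-β) := Real.rpow_nonneg ht0.le _
    have h2 : (0:ℝ) ≤ min 1 t := le_min zero_le_one ht0.le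
    positivity
  -- key domination bound
  have hkey : ∀ x ∈ Ioc (0:ℝ) 1, ∀ t ∈ Ioi (0:ℝ),
      ψ (t/x) * (1 - Real.exp (-t)) / x ^ (1+β) ≤ g t := by
    intro x hx t ht
    have hx0 : 0 < x := hx.1
    have ht0 : (0:ℝ) < t := ht
    have hpx : 0 < x ^ (1+β) := Real.rpow_pos_of_pos hx0 _
    have hpt : 0 < t ^ (1+β) := Real.rpow_pos_of_pos ht0 _
    have hneg : t ^ (-1-β) = (t ^ (1+β))⁻¹ := by
      rw [show (-1-β:ℝ) = -(1+β) from by ring, Real.rpow_neg ht0.le]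
    have hstep : ψ (t/x) / x ^ (1+β) ≤ D * t ^ (-1-β) := by
      rcases le_or_gt (t/x) A with hcase | hcase
      · have h1 : ψ (t/x) / x ^ (1+β) ≤ 1 / x ^ (1+β) := by gcongr; exact hψ1 _
        have ht_le : t ≤ A * x := by
          rw [div_le_iff₀ hx0] at hcase; linarith [hcase]
        have h2 : t ^ (1+β) ≤ A ^ (2+β) * x ^ (1+β) := by
          calc t ^ (1+β) ≤ (A*x) ^ (1+β) := Real.rpow_le_rpow ht0.le ht_le (by linarith)
            _ = A ^ (1+β) * x ^ (1+β) := Real.mul_rpow hApos.le hx0.le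
            _ ≤ A ^ (2+β) * x ^ (1+β) := by
                exact mul_le_mul_of_nonneg_right
                  (Real.rpow_le_rpow_of_exponent_le hA1 (by linarith)) hpx.le
        have h3 : 1 / x ^ (1+β) ≤ D * t ^ (-1-β) := by
          rw [hneg, ← div_eq_mul_inv, div_le_div_iff₀ hpx hpt, one_mul]
          have hD2 : A ^ (2+β) * x ^ (1+β) ≤ D * x ^ (1+β) := by
            apply mul_le_mul_of_nonneg_right _ hpx.le
            nlinarith
          linarith
        exact le_trans h1 h3
      · have htail := hAtail (t/x) hcase.le
        have hdiv : (t/x) ^ (1+β) = t ^ (1+β) / x ^ (1+β) := Real.div_rpow ht0.le hx0.le _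
        have h2 : (t ^ (1+β) / x ^ (1+β)) * ψ (t/x) ≤ cν + 1 := by rwa [hdiv] at htail
        have hψle : ψ (t/x) ≤ (cν+1) * (x ^ (1+β) / t ^ (1+β)) := by
          calc ψ (t/x) = ((t^(1+β)/x^(1+β)) * ψ (t/x)) * (x^(1+β)/t^(1+β)) := by
                field_simp
            _ ≤ (cν+1) * (x^(1+β)/t^(1+β)) :=
                mul_le_mul_of_nonneg_right h2 (by positivity)
        calc ψ (t/x) / x ^ (1+β) ≤ ((cν+1) * (x^(1+β)/t^(1+β))) / x^(1+β) := by
              gcongr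
          _ = (cν+1) * t ^ (-1-β) := by rw [hneg]; field_simp
          _ ≤ D * t ^ (-1-β) := by
              apply mul_le_mul_of_nonneg_right _ (Real.rpow_nonneg ht0.le _)
              have hA2 : 0 ≤ A ^ (2+β) := Real.rpow_nonneg hApos.le _
              linarith
    have e1 : ψ (t/x) * (1 - Real.exp (-t)) / x ^ (1+β)
        = (1 - Real.exp (-t)) * (ψ (t/x) / x ^ (1+β)) := by ring
    rw [e1]
    calc (1 - Real.exp (-t)) * (ψ (t/x) / x ^ (1+β))
        ≤ min 1 t * (ψ (t/x) / x ^ (1+β)) :=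
          mul_le_mul_of_nonneg_right one_sub_exp_le_min (div_nonneg (hψ0 _) hpx.le)
      _ ≤ min 1 t * (D * t ^ (-1-β)) :=
          mul_le_mul_of_nonneg_left hstep (le_min zero_le_one ht0.le)
      _ = g t := by rw [hgdef]; ring
  -- measurability and bounds for dominated convergence
  have hFmeas : ∀ x : ℝ, AEStronglyMeasurable
      (fun t => ψ (t/x) * (1 - Real.exp (-t)) / x ^ (1+β)) (volume.restrict (Ioi (0:ℝ))) := by
    intro x
    exact (((hψmeas.comp (measurable_id.div_const x)).mul
      ((continuous_const.sub (Real.continuous_exp.comp continuous_neg)).measurable)).div_const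
        _).aestronglyMeasurable
  have hFbound : ∀ x ∈ Ioc (0:ℝ) 1, ∀ᵐ t ∂(volume.restrict (Ioi (0:ℝ))),
      ‖ψ (t/x) * (1 - Real.exp (-t)) / x ^ (1+β)‖ ≤ g t := by
    intro x hx
    rw [ae_restrict_iff' measurableSet_Ioi]
    refine Eventually.of_forall fun t ht => ?_
    have ht0 : (0:ℝ) < t := ht
    have hFnn : 0 ≤ ψ (t/x) * (1 - Real.exp (-t)) / x ^ (1+β) :=
      div_nonneg (mul_nonneg (hψ0 _) (one_sub_exp_nonneg ht0.le))
        (Real.rpow_pos_of_pos hx.1 _).le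
    rw [Real.norm_eq_abs, abs_of_nonneg hFnn]
    exact hkey x hx t ht
  -- pointwise limits
  have hlim : ∀ᵐ t ∂(volume.restrict (Ioi (0:ℝ))),
      Tendsto (fun x : ℝ => ψ (t/x) * (1 - Real.exp (-t)) / x ^ (1+β)) (𝓝[>] (0:ℝ))
        (𝓝 (cν * ((1 - Real.exp (-t)) * t ^ (-1-β)))) := by
    rw [ae_restrict_iff' measurableSet_Ioi]
    refine Eventually.of_forall fun t ht => ?_
    have ht0 : (0:ℝ) < t := ht
    have h1 : Tendsto (fun x : ℝ => t / x) (𝓝[>] (0:ℝ)) atTop := by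
      have h2 := Tendsto.const_mul_atTop ht0 (tendsto_inv_nhdsGT_zero (𝕜 := ℝ))
      refine h2.congr fun x => ?_
      rw [div_eq_mul_inv]
    have h2 : Tendsto (fun x : ℝ => (t/x) ^ (1+β) * ψ (t/x)) (𝓝[>] (0:ℝ)) (𝓝 cν) :=
      hν_tail.comp h1
    have h3 := h2.mul_const ((1 - Real.exp (-t)) * t ^ (-1-β))
    have hc : cν * ((1 - Real.exp (-t)) * t ^ (-1-β)) = cν * ((1 - Real.exp (-t)) * t ^ (-1-β)) :=
      rfl
    refine Tendsto.congr' ?_ h3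
    filter_upwards [self_mem_nhdsWithin] with x hx
    have hx0 : (0:ℝ) < x := hx
    have hdiv : (t/x) ^ (1+β) = t ^ (1+β) / x ^ (1+β) := Real.div_rpow ht0.le hx0.le _
    have hneg : t ^ (-1-β) = (t ^ (1+β))⁻¹ := by
      rw [show (-1-β:ℝ) = -(1+β) from by ring, Real.rpow_neg ht0.le]
    have hpt : (0:ℝ) < t ^ (1+β) := Real.rpow_pos_of_pos ht0 _
    have hpx : (0:ℝ) < x ^ (1+β) := Real.rpow_pos_of_pos hx0 _
    rw [hdiv, hneg]
    field_simp
  -- dominated convergence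
  have hDCT := MeasureTheory.tendsto_integral_filter_of_dominated_convergence
      (μ := volume.restrict (Ioi (0:ℝ))) (l := 𝓝[>] (0:ℝ))
      (F := fun (x : ℝ) t => ψ (t/x) * (1 - Real.exp (-t)) / x ^ (1+β))
      (f := fun t => cν * ((1 - Real.exp (-t)) * t ^ (-1-β)))
      g (Eventually.of_forall hFmeas)
      (by filter_upwards [Ioc_mem_nhdsGT zero_lt_one] with x hx
          exact hFbound x hx)
      hg_int hlim
  have hval : ∫ t in Ioi (0:ℝ), cν * ((1 - Real.exp (-t)) * t ^ (-1-β)) = K := by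
    rw [integral_const_mul, aux_J hβ0 hβ1, hK]
    ring
  rw [hval] at hDCT
  have hTend : Tendsto (fun x : ℝ => H x / x ^ (1+β)) (𝓝[>] (0:ℝ)) (𝓝 K) := by
    refine Tendsto.congr' ?_ hDCT
    filter_upwards [self_mem_nhdsWithin] with x hx
    exact (hHdiv x hx).symm
  -- uniform bound
  have hFint : ∀ x ∈ Ioc (0:ℝ) 1,
      Integrable (fun t => ψ (t/x) * (1 - Real.exp (-t)) / x ^ (1+β))
        (volume.restrict (Ioi (0:ℝ))) :=
    fun x hx => Integrable.mono' hg_int (hFmeas x) (hFbound x hx)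
  set Cg : ℝ := ∫ t in Ioi (0:ℝ), g t with hCgdef
  have hCg0 : 0 ≤ Cg := setIntegral_nonneg measurableSet_Ioi hg_nonneg
  have hCbound : ∀ x ∈ Ioc (0:ℝ) 1, H x ≤ (Cg + 1) * x ^ (1+β) := by
    intro x hx
    have hpx : (0:ℝ) < x ^ (1+β) := Real.rpow_pos_of_pos hx.1 _
    have h1 : H x / x ^ (1+β) ≤ Cg := by
      rw [hHdiv x hx.1]
      refine integral_mono_ae (hFint x hx) hg_int ?_
      refine (hFbound x hx).mono fun t htle => ?_
      exact le_trans (le_abs_self _) (by rwa [← Real.norm_eq_abs])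
    rw [div_le_iff₀ hpx] at h1
    nlinarith
  refine ⟨hmono, ⟨Cg + 1, by linarith, hCbound⟩, hTend,
    ⟨fun x => H x / x ^ (1+β) / K, ?_, ⟨(Cg+1)/K, ?_⟩, ?_, ?_⟩⟩
  · intro x hx
    exact div_nonneg (div_nonneg (hHnonneg x hx.1.le)
      (Real.rpow_pos_of_pos hx.1 _).le) hKpos.le
  · intro x hx
    have hpx : (0:ℝ) < x ^ (1+β) := Real.rpow_pos_of_pos hx.1 _
    have hHle : H x / x ^ (1+β) ≤ Cg + 1 := (div_le_iff₀ hpx).mpr (hCbound x hx)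
    exact (div_le_div_iff_of_pos_right hKpos).mpr hHle
  · have h := hTend.div_const K
    rwa [div_self hKpos.ne'] at h
  · intro x hx
    have hpx : (0:ℝ) < x ^ (1+β) := Real.rpow_pos_of_pos hx.1 _
    show H x = K * x ^ (1+β) * (H x / x ^ (1+β) / K)
    field_simp
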